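/- Let B be an integral domain and let A be a retract of B, i.e., there exist ring homomorphisms ι : A → B and π : B → A with π ∘ ι = id_A (equivalently, A is a subring of B and B ≅ A ⊕ I as A-modules for some ideal I of B). Then A is algebraically closed in B: if an element b ∈ B (viewed via ι) is a root of a nonzero polynomial with coefficients in A, then b lies in the image of ι. -/

import Mathlib

/-- If `A` is a retract of an integral domain `B` (witnessed by ring homomorphisms
`ι : A → B` and `π : B → A` with `π ∘ ι = id`), then `A` is algebraically closed in `B`:
any `b : B` which is a root of a nonzero polynomial with coefficients in `A`
(via `ι`) lies in the image of `ι`. -/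
theorem retract_algebraically_closed {A B : Type*} [CommRing A] [CommRing B] [IsDomain B]
    (ι : A →+* B) (π : B →+* A) (h : π.comp ι = RingHom.id A)
    (b : B) (p : Polynomial A) (hp : p ≠ 0)
    (hroot : Polynomial.eval₂ ι b p = 0) :
    b ∈ Set.range ι := by
  classical
  have hπι : ∀ x, π (ι x) = x := fun x => by
    have := congrArg (fun f : A →+* A => f x) h; simpa using this
  have hinj : Function.Injective ι := fun x y hxy => by
    rw [← hπι x, ← hπι y, hxy]
  haveI : IsDomain A := Function.Injective.isDomain ι hinj
  set a := π b with ha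
  set c := b - ι a with hc
  have hπc : π c = 0 := by simp [hc, hπι, ha]
  set q := Polynomial.taylor a p with hq
  have hq0 : q ≠ 0 := fun hq0 => hp (Polynomial.taylor_injective a (by rw [map_zero]; exact hq0))
  have hqroot : Polynomial.eval₂ ι c q = 0 := by
    rw [hq, Polynomial.taylor_apply, Polynomial.eval₂_comp]
    simpa [hc] using hroot
  suffices hc0 : c = 0 by
    exact ⟨a, (sub_eq_zero.mp hc0).symm⟩
  by_contra hcne
  obtain ⟨r, hr, hnd⟩ := q.exists_eq_pow_rootMultiplicity_mul_and_not_dvd hq0 0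
  have hrroot : Polynomial.eval₂ ι c r = 0 := by
    rw [hr] at hqroot
    simp only [Polynomial.eval₂_mul, Polynomial.eval₂_pow, Polynomial.eval₂_sub,
      Polynomial.eval₂_X, Polynomial.eval₂_C, map_zero, sub_zero] at hqroot
    rcases mul_eq_zero.mp hqroot with h1 | h1
    · exact absurd ((pow_eq_zero_iff'.mp h1).1) hcne
    · exact h1
  have hev : Polynomial.eval 0 r = 0 := by
    have := congrArg π hrroot
    rw [Polynomial.hom_eval₂, h, hπc, map_zero] at this
    simpa [Polynomial.coeff_zero_eq_eval_zero] using this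
  exact hnd (Polynomial.dvd_iff_isRoot.mpr hev)
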